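/- Let X be an abelian group, W a finite group acting on X by automorphisms, and let (π,V) be a module over ℂ[X ⋊ W]. Suppose t ∈ T = Hom(X,ℂˣ) is such that V is generated as a ℂ[X ⋊ W]-module by the weight space V_t = {v ∈ V : π(x)v = t(x)v for all x ∈ X}. Then the natural map ℂ[X ⋊ W] ⊗_{ℂ[X ⋊ W_t]} V_t → V is an isomorphism of ℂ[X ⋊ W]-modules. -/

import Mathlib

/- STATEMENT 6: Let `X` be an abelian group, `W` a finite group acting on `X` by
automorphisms, and `(π, V)` a module over `ℂ[X ⋊ W]`.  Suppose `t ∈ T = Hom(X, ℂˣ)` is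
such that `V` is generated as a `ℂ[X ⋊ W]`-module by the weight space
`V_t = {v : x • v = t(x) v}`.  Then the natural map
`ℂ[X ⋊ W] ⊗_{ℂ[X ⋊ W_t]} V_t → V` is an isomorphism of `ℂ[X ⋊ W]`-modules.

Since `ℂ[X ⋊ W]` is free as a right module over the subalgebra `ℂ[X ⋊ W_t]`, with any
system of representatives of the left cosets of `H = X ⋊ W_t` in `G = X ⋊ W` as a basis,
the natural map is an isomorphism if and only if, for every such system `Rset` of coset
representatives, the comparison map `(f : Rset → V_t) ↦ Σ_{r ∈ Rset} r • f(r)` (which is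
the composition of the natural map with the corresponding ℂ-linear parametrisation of
`ℂ[X ⋊ W] ⊗_{ℂ[X ⋊ W_t]} V_t`) is bijective.  (The abelian group `X` is written
multiplicatively.) -/

/-- The stabilizer `W_t ≤ W` of the character `t : X →* ℂˣ` for the action
`(w · t)(x) = t(φ(w)⁻¹ x)`; as a set it equals `{w : t ∘ φ(w) = t}`. -/
def charStab {X W : Type*} [CommGroup X] [Group W] (φ : W →* MulAut X) (t : X →* ℂˣ) :
    Subgroup W where
  carrier := {w | ∀ x : X, t (φ w x) = t x}
  one_mem' := fun x => by simp
  mul_mem' := by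
    intro a b ha hb x
    have h : φ (a * b) x = φ a (φ b x) := by rw [map_mul]; rfl
    rw [h, ha, hb]
  inv_mem' := by
    intro a ha x
    have h1 : φ a ((φ a)⁻¹ x) = x := by simp
    have h2 := ha ((φ a)⁻¹ x)
    rw [h1] at h2
    rw [map_inv]
    exact h2.symm

/-- The `t`-weight space `V_t` of a `ℂ[X ⋊ W]`-module `V`. -/
def tWeight {X W : Type*} [CommGroup X] [Group W] (φ : W →* MulAut X)
    {V : Type*} [AddCommGroup V] [Module (MonoidAlgebra ℂ (X ⋊[φ] W)) V]
    (t : X →* ℂˣ) : Set V :=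
  {v | ∀ x : X,
    (MonoidAlgebra.single (SemidirectProduct.inl x : X ⋊[φ] W) (1 : ℂ)) • v
      = (MonoidAlgebra.single (1 : X ⋊[φ] W) ((t x : ℂ))) • v}

section AuxStmt6

open MonoidAlgebra SemidirectProduct Finset

variable {X W : Type*} [CommGroup X] [Group W] (φ : W →* MulAut X)

/-- Embedding `ℂ[X] → ℂ[X ⋊ W]`. -/
noncomputable def stmt6Emap : MonoidAlgebra ℂ X →ₐ[ℂ] MonoidAlgebra ℂ (X ⋊[φ] W) :=
  MonoidAlgebra.lift ℂ _ X ((MonoidAlgebra.of ℂ (X ⋊[φ] W)).comp SemidirectProduct.inl)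

/-- Evaluation of `ℂ[X]` at a character `χ`. -/
noncomputable def stmt6ev (χ : X →* ℂˣ) : MonoidAlgebra ℂ X →ₐ[ℂ] ℂ :=
  MonoidAlgebra.lift ℂ ℂ X ((Units.coeHom ℂ).comp χ)

lemma stmt6Emap_single (a : X) (c : ℂ) :
    stmt6Emap φ (MonoidAlgebra.single a c)
      = MonoidAlgebra.single (inl a : X ⋊[φ] W) c := by
  rw [stmt6Emap, MonoidAlgebra.lift_single]
  simp [MonoidAlgebra.of_apply, MonoidAlgebra.smul_single']

lemma stmt6ev_single (χ : X →* ℂˣ) (a : X) (c : ℂ) :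
    stmt6ev χ (MonoidAlgebra.single a c) = c * (χ a : ℂ) := by
  rw [stmt6ev, MonoidAlgebra.lift_single]
  simp [smul_eq_mul]

variable {V : Type*} [AddCommGroup V] [Module (MonoidAlgebra ℂ (X ⋊[φ] W)) V]

lemma stmt6_central (c : ℂ) (g : X ⋊[φ] W) (d : ℂ) (v : V) :
    MonoidAlgebra.single (1 : X ⋊[φ] W) c • (MonoidAlgebra.single g d • v)
      = MonoidAlgebra.single g d • (MonoidAlgebra.single (1 : X ⋊[φ] W) c • v) := by
  rw [← mul_smul, ← mul_smul, MonoidAlgebra.single_mul_single,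
    MonoidAlgebra.single_mul_single, one_mul, mul_one, mul_comm]

lemma stmt6_weight_smul (χ : X →* ℂˣ) (v : V)
    (hv : ∀ x : X, MonoidAlgebra.single (inl x : X ⋊[φ] W) (1 : ℂ) • v
      = MonoidAlgebra.single (1 : X ⋊[φ] W) ((χ x : ℂ)) • v)
    (b : MonoidAlgebra ℂ X) :
    stmt6Emap φ b • v = MonoidAlgebra.single (1 : X ⋊[φ] W) (stmt6ev χ b) • v := by
  induction b using MonoidAlgebra.induction_on with
  | of a =>
      rw [MonoidAlgebra.of_apply, stmt6Emap_single, stmt6ev_single, one_mul, hv]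
  | add f g hf hg =>
      rw [map_add, add_smul, hf, hg, map_add, MonoidAlgebra.single_add, add_smul]
  | smul c f hf =>
      rw [map_smul, map_smul, Algebra.smul_def, mul_smul, hf, smul_eq_mul,
        MonoidAlgebra.coe_algebraMap]
      show MonoidAlgebra.single (1 : X ⋊[φ] W) c • _ = _
      rw [← mul_smul, MonoidAlgebra.single_mul_single, one_mul]

lemma stmt6_weight_indep {ι : Type*} [Fintype ι] (χ : ι → (X →* ℂˣ))
    (hχ : Function.Injective χ) (v : ι → V)
    (hv : ∀ i, ∀ x : X, MonoidAlgebra.single (inl x : X ⋊[φ] W) (1 : ℂ) • v i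
      = MonoidAlgebra.single (1 : X ⋊[φ] W) ((χ i x : ℂ)) • v i)
    (hsum : ∑ i, v i = 0) : ∀ i, v i = 0 := by
  intro i₀
  classical
  have hx : ∀ j, j ≠ i₀ → ∃ x : X, χ j x ≠ χ i₀ x := by
    intro j hj
    by_contra h
    push_neg at h
    exact hj (hχ (MonoidHom.ext h))
  set sep : ι → X := fun j => if h : ∃ x : X, χ j x ≠ χ i₀ x then h.choose else 1 with hsep
  have hsep' : ∀ j, j ≠ i₀ → χ j (sep j) ≠ χ i₀ (sep j) := by
    intro j hj
    have h := hx j hj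
    simp only [hsep, dif_pos h]
    exact h.choose_spec
  set P : MonoidAlgebra ℂ X :=
    ∏ j ∈ Finset.univ.erase i₀,
      (MonoidAlgebra.single (sep j) (1 : ℂ)
        - MonoidAlgebra.single (1 : X) ((χ j (sep j) : ℂ))) with hP
  have hev : ∀ i, stmt6ev (χ i) P
      = ∏ j ∈ Finset.univ.erase i₀, ((χ i (sep j) : ℂ) - (χ j (sep j) : ℂ)) := by
    intro i
    rw [hP, map_prod]
    refine Finset.prod_congr rfl ?_
    intro j _
    rw [map_sub, stmt6ev_single, stmt6ev_single, one_mul]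
    simp
  have key : ∀ j, stmt6Emap φ P • v j
      = MonoidAlgebra.single (1 : X ⋊[φ] W)
          (∏ k ∈ Finset.univ.erase i₀, ((χ j (sep k) : ℂ) - (χ k (sep k) : ℂ))) • v j := by
    intro j
    rw [stmt6_weight_smul φ (χ j) (v j) (hv j) P, hev j]
  have hzero : ∀ j, j ≠ i₀ → stmt6Emap φ P • v j = 0 := by
    intro j hj
    rw [key j]
    have : (∏ k ∈ Finset.univ.erase i₀, ((χ j (sep k) : ℂ) - (χ k (sep k) : ℂ))) = 0 :=
      Finset.prod_eq_zero (Finset.mem_erase.2 ⟨hj, Finset.mem_univ j⟩) (by ring)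
    rw [this, MonoidAlgebra.single_zero, zero_smul]
  have hmain : stmt6Emap φ P • v i₀ = 0 := by
    have h0 : stmt6Emap φ P • (∑ i, v i) = 0 := by rw [hsum, smul_zero]
    rw [Finset.smul_sum] at h0
    rw [Finset.sum_eq_single i₀ (fun j _ hj => hzero j hj) (by simp)] at h0
    exact h0
  set c : ℂ := ∏ k ∈ Finset.univ.erase i₀, ((χ i₀ (sep k) : ℂ) - (χ k (sep k) : ℂ)) with hc
  have hcne : c ≠ 0 := by
    rw [hc]
    refine Finset.prod_ne_zero_iff.2 ?_
    intro k hk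
    have hk' := hsep' k (Finset.mem_erase.1 hk).1
    rw [sub_ne_zero]
    exact fun h => hk' (Units.ext h.symm)
  rw [key i₀, ← hc] at hmain
  have : MonoidAlgebra.single (1 : X ⋊[φ] W) (c⁻¹ : ℂ) •
      (MonoidAlgebra.single (1 : X ⋊[φ] W) c • v i₀) = 0 := by rw [hmain, smul_zero]
  rwa [← mul_smul, MonoidAlgebra.single_mul_single, one_mul, inv_mul_cancel₀ hcne,
    ← MonoidAlgebra.one_def, one_smul] at this

lemma stmt6_conj (g : X ⋊[φ] W) (x : X) :
    (inl x : X ⋊[φ] W) * g = g * inl ((φ g.right)⁻¹ x) := by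
  ext
  · show x * φ (1 : W) g.left = g.left * φ g.right ((φ g.right)⁻¹ x)
    rw [map_one, MulAut.one_apply, MulAut.apply_inv_self, mul_comm]
  · show (1 : W) * g.right = g.right * 1
    rw [one_mul, mul_one]

lemma stmt6_tilt (t : X →* ℂˣ) (g : X ⋊[φ] W) (u : V) (hu : u ∈ tWeight φ t) (x : X) :
    MonoidAlgebra.single (inl x : X ⋊[φ] W) (1 : ℂ)
        • (MonoidAlgebra.single g (1 : ℂ) • u)
      = MonoidAlgebra.single (1 : X ⋊[φ] W) ((t ((φ g.right)⁻¹ x) : ℂ))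
        • (MonoidAlgebra.single g (1 : ℂ) • u) := by
  have hy : MonoidAlgebra.single (g * inl ((φ g.right)⁻¹ x)) (1 : ℂ)
      = MonoidAlgebra.single g (1 : ℂ)
        * MonoidAlgebra.single (inl ((φ g.right)⁻¹ x)) (1 : ℂ) := by
    rw [MonoidAlgebra.single_mul_single, mul_one]
  rw [← mul_smul, MonoidAlgebra.single_mul_single, one_mul, stmt6_conj φ g x, hy,
    mul_smul, hu ((φ g.right)⁻¹ x), stmt6_central]

lemma stmt6_tW_zero (t : X →* ℂˣ) : (0 : V) ∈ tWeight φ t := by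
  intro x; rw [smul_zero, smul_zero]

lemma stmt6_tW_add (t : X →* ℂˣ) {u w : V} (hu : u ∈ tWeight φ t) (hw : w ∈ tWeight φ t) :
    u + w ∈ tWeight φ t := by
  intro x; rw [smul_add, smul_add, hu x, hw x]

lemma stmt6_tW_sub (t : X →* ℂˣ) {u w : V} (hu : u ∈ tWeight φ t) (hw : w ∈ tWeight φ t) :
    u - w ∈ tWeight φ t := by
  intro x; rw [smul_sub, smul_sub, hu x, hw x]

lemma stmt6_tW_central (t : X →* ℂˣ) (c : ℂ) {u : V} (hu : u ∈ tWeight φ t) :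
    MonoidAlgebra.single (1 : X ⋊[φ] W) c • u ∈ tWeight φ t := by
  intro x
  calc MonoidAlgebra.single (inl x : X ⋊[φ] W) (1 : ℂ)
        • (MonoidAlgebra.single (1 : X ⋊[φ] W) c • u)
      = MonoidAlgebra.single (1 : X ⋊[φ] W) c
        • (MonoidAlgebra.single (inl x : X ⋊[φ] W) (1 : ℂ) • u) :=
        (stmt6_central φ c (inl x) 1 u).symm
    _ = MonoidAlgebra.single (1 : X ⋊[φ] W) c
        • (MonoidAlgebra.single (1 : X ⋊[φ] W) ((t x : ℂ)) • u) := by rw [hu x]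
    _ = MonoidAlgebra.single (1 : X ⋊[φ] W) ((t x : ℂ))
        • (MonoidAlgebra.single (1 : X ⋊[φ] W) c • u) := stmt6_central φ c 1 _ u

lemma stmt6_tW_H (t : X →* ℂˣ) {h : X ⋊[φ] W}
    (hh : h ∈ (charStab φ t).comap (SemidirectProduct.rightHom (φ := φ)))
    {u : V} (hu : u ∈ tWeight φ t) :
    MonoidAlgebra.single h (1 : ℂ) • u ∈ tWeight φ t := by
  intro x
  rw [stmt6_tilt φ t h u hu x]
  have hh' : ∀ y : X, t (φ h.right y) = t y := hh
  have hteq : t ((φ h.right)⁻¹ x) = t x := by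
    have h2 := hh' ((φ h.right)⁻¹ x)
    rw [MulAut.apply_inv_self] at h2
    exact h2.symm
  rw [hteq]

end AuxStmt6

theorem stmt_6 {X W V : Type*} [CommGroup X] [Group W] [Finite W] (φ : W →* MulAut X)
    [AddCommGroup V] [Module (MonoidAlgebra ℂ (X ⋊[φ] W)) V] (t : X →* ℂˣ)
    (hgen : Submodule.span (MonoidAlgebra ℂ (X ⋊[φ] W)) (tWeight φ t (V := V)) = ⊤)
    (Rset : Finset (X ⋊[φ] W))
    (hcover : ∀ g : X ⋊[φ] W, ∃ r ∈ Rset,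
      r⁻¹ * g ∈ (charStab φ t).comap (SemidirectProduct.rightHom (φ := φ)))
    (hsep : ∀ r ∈ Rset, ∀ r' ∈ Rset,
      r⁻¹ * r' ∈ (charStab φ t).comap (SemidirectProduct.rightHom (φ := φ)) → r = r') :
    Function.Bijective (fun f : (Rset → tWeight φ t (V := V)) =>
      ∑ r : Rset, (MonoidAlgebra.single (r : X ⋊[φ] W) (1 : ℂ)) • (f r : V)) := by
  classical
  open MonoidAlgebra SemidirectProduct in
  constructor
  · -- injectivity
    intro f f' heq
    have heq' : ∑ r : Rset, MonoidAlgebra.single ((r : X ⋊[φ] W)) (1 : ℂ)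
          • ((f r : V) - (f' r : V)) = 0 := by
      have h1 : (∑ r : Rset, MonoidAlgebra.single ((r : X ⋊[φ] W)) (1 : ℂ) • (f r : V))
          = ∑ r : Rset, MonoidAlgebra.single ((r : X ⋊[φ] W)) (1 : ℂ) • (f' r : V) := heq
      calc ∑ r : Rset, MonoidAlgebra.single ((r : X ⋊[φ] W)) (1 : ℂ)
            • ((f r : V) - (f' r : V))
          = ∑ r : Rset, (MonoidAlgebra.single ((r : X ⋊[φ] W)) (1 : ℂ) • (f r : V)
              - MonoidAlgebra.single ((r : X ⋊[φ] W)) (1 : ℂ) • (f' r : V)) := by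
            refine Finset.sum_congr rfl fun r _ => ?_; rw [smul_sub]
        _ = 0 := by rw [Finset.sum_sub_distrib, h1, sub_self]
    have hkey : ∀ r : Rset,
        MonoidAlgebra.single ((r : X ⋊[φ] W)) (1 : ℂ) • ((f r : V) - (f' r : V)) = 0 := by
      refine stmt6_weight_indep φ
        (χ := fun r : Rset => t.comp (MulEquiv.toMonoidHom (φ ((r : X ⋊[φ] W)).right)⁻¹))
        ?_ _ ?_ heq'
      · intro r r' h
        have hfun : ∀ x : X, t ((φ ((r : X ⋊[φ] W)).right)⁻¹ x)
            = t ((φ ((r' : X ⋊[φ] W)).right)⁻¹ x) := fun x => by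
          have := DFunLike.congr_fun h x
          simpa using this
        have hmem : ((r : X ⋊[φ] W))⁻¹ * (r' : X ⋊[φ] W)
            ∈ (charStab φ t).comap (SemidirectProduct.rightHom (φ := φ)) := by
          rw [Subgroup.mem_comap]
          intro y
          have h1 : SemidirectProduct.rightHom (((r : X ⋊[φ] W))⁻¹ * (r' : X ⋊[φ] W))
              = ((r : X ⋊[φ] W)).right⁻¹ * ((r' : X ⋊[φ] W)).right := by
            rw [map_mul, map_inv]; rfl
          rw [h1, map_mul, map_inv, MulAut.mul_apply]
          have h2 := hfun (φ ((r' : X ⋊[φ] W)).right y)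
          rwa [MulAut.inv_apply_self] at h2
        exact Subtype.ext (hsep _ r.2 _ r'.2 hmem)
      · intro r x
        exact stmt6_tilt φ t _ _ (stmt6_tW_sub φ t (f r).2 (f' r).2) x
    funext r
    have h0 := hkey r
    have h1 : MonoidAlgebra.single (((r : X ⋊[φ] W))⁻¹) (1 : ℂ)
        • (MonoidAlgebra.single ((r : X ⋊[φ] W)) (1 : ℂ) • ((f r : V) - (f' r : V))) = 0 := by
      rw [h0, smul_zero]
    rw [← mul_smul, MonoidAlgebra.single_mul_single, one_mul, inv_mul_cancel,
      ← MonoidAlgebra.one_def, one_smul, sub_eq_zero] at h1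
    exact Subtype.ext h1
  · -- surjectivity
    set Sr : Set V := Set.range (fun f : (Rset → tWeight φ t (V := V)) =>
      ∑ r : Rset, (MonoidAlgebra.single (r : X ⋊[φ] W) (1 : ℂ)) • (f r : V)) with hSr
    have c0 : (0 : V) ∈ Sr := by
      refine ⟨fun _ => ⟨0, stmt6_tW_zero φ t⟩, ?_⟩
      show (∑ r : Rset, MonoidAlgebra.single ((r : X ⋊[φ] W)) (1 : ℂ) • (0 : V)) = 0
      simp
    have cadd : ∀ v₁ ∈ Sr, ∀ v₂ ∈ Sr, v₁ + v₂ ∈ Sr := by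
      rintro _ ⟨f₁, rfl⟩ _ ⟨f₂, rfl⟩
      refine ⟨fun r => ⟨(f₁ r : V) + (f₂ r : V), stmt6_tW_add φ t (f₁ r).2 (f₂ r).2⟩, ?_⟩
      show (∑ r : Rset, MonoidAlgebra.single ((r : X ⋊[φ] W)) (1 : ℂ)
          • ((f₁ r : V) + (f₂ r : V))) = _
      simp only [smul_add]
      rw [Finset.sum_add_distrib]
    have csingle : ∀ (g : X ⋊[φ] W) (u : V), u ∈ tWeight φ t →
        MonoidAlgebra.single g (1 : ℂ) • u ∈ Sr := by
      intro g u hu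
      obtain ⟨r, hr, hmem⟩ := hcover g
      have hg : g = r * (r⁻¹ * g) := by rw [mul_inv_cancel_left]
      have hu' : MonoidAlgebra.single (r⁻¹ * g) (1 : ℂ) • u ∈ tWeight φ t :=
        stmt6_tW_H φ t hmem hu
      refine ⟨fun r' => if r' = (⟨r, hr⟩ : Rset)
        then ⟨MonoidAlgebra.single (r⁻¹ * g) (1 : ℂ) • u, hu'⟩
        else ⟨0, stmt6_tW_zero φ t⟩, ?_⟩
      show (∑ r' : Rset, MonoidAlgebra.single ((r' : X ⋊[φ] W)) (1 : ℂ)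
          • ((if r' = (⟨r, hr⟩ : Rset)
              then (⟨MonoidAlgebra.single (r⁻¹ * g) (1 : ℂ) • u, hu'⟩
                : tWeight φ t (V := V))
              else ⟨0, stmt6_tW_zero φ t⟩ : tWeight φ t (V := V)) : V))
          = MonoidAlgebra.single g (1 : ℂ) • u
      rw [Finset.sum_eq_single (⟨r, hr⟩ : Rset)]
      · rw [if_pos rfl, ← mul_smul, MonoidAlgebra.single_mul_single, one_mul, ← hg]
      · intro r' _ hr'
        rw [if_neg hr']
        show MonoidAlgebra.single ((r' : X ⋊[φ] W)) (1 : ℂ) • (0 : V) = 0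
        rw [smul_zero]
      · intro habs
        exact absurd (Finset.mem_univ _) habs
    have ccentral : ∀ (c : ℂ), ∀ v ∈ Sr,
        MonoidAlgebra.single (1 : X ⋊[φ] W) c • v ∈ Sr := by
      rintro c _ ⟨f, rfl⟩
      refine ⟨fun r => ⟨MonoidAlgebra.single (1 : X ⋊[φ] W) c • (f r : V),
        stmt6_tW_central φ t c (f r).2⟩, ?_⟩
      show (∑ r : Rset, MonoidAlgebra.single ((r : X ⋊[φ] W)) (1 : ℂ)
          • (MonoidAlgebra.single (1 : X ⋊[φ] W) c • (f r : V)))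
          = MonoidAlgebra.single (1 : X ⋊[φ] W) c
            • ∑ r : Rset, MonoidAlgebra.single ((r : X ⋊[φ] W)) (1 : ℂ) • (f r : V)
      rw [Finset.smul_sum]
      exact Finset.sum_congr rfl fun r _ => (stmt6_central φ c _ 1 _).symm
    have csmul : ∀ (a : MonoidAlgebra ℂ (X ⋊[φ] W)), ∀ v ∈ Sr, a • v ∈ Sr := by
      intro a
      induction a using MonoidAlgebra.induction_on with
      | of g =>
          rintro _ ⟨f, rfl⟩
          have h1 : MonoidAlgebra.of ℂ (X ⋊[φ] W) g
              • (∑ r : Rset, MonoidAlgebra.single ((r : X ⋊[φ] W)) (1 : ℂ) • (f r : V))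
              = ∑ r : Rset, MonoidAlgebra.single (g * (r : X ⋊[φ] W)) (1 : ℂ) • (f r : V) := by
            rw [MonoidAlgebra.of_apply, Finset.smul_sum]
            refine Finset.sum_congr rfl fun r _ => ?_
            rw [← mul_smul, MonoidAlgebra.single_mul_single, one_mul]
          show MonoidAlgebra.of ℂ (X ⋊[φ] W) g
            • (∑ r : Rset, MonoidAlgebra.single ((r : X ⋊[φ] W)) (1 : ℂ) • (f r : V)) ∈ Sr
          rw [h1]
          exact Finset.sum_induction _ (· ∈ Sr) (fun a b ha hb => cadd a ha b hb) c0
            (fun r _ => csingle (g * (r : X ⋊[φ] W)) (f r : V) (f r).2)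
      | add a b ha hb =>
          intro v hv
          rw [add_smul]
          exact cadd _ (ha v hv) _ (hb v hv)
      | smul c a ha =>
          intro v hv
          have h1 : algebraMap ℂ (MonoidAlgebra ℂ (X ⋊[φ] W)) c
              = MonoidAlgebra.single (1 : X ⋊[φ] W) c := by
            rw [MonoidAlgebra.coe_algebraMap]; simp
          rw [Algebra.smul_def, mul_smul, h1]
          exact ccentral c _ (ha v hv)
    have hsub : tWeight φ t (V := V) ⊆ Sr := by
      intro v hv
      obtain ⟨r, hr, hmem⟩ := hcover 1
      have h1 : r⁻¹ ∈ (charStab φ t).comap (SemidirectProduct.rightHom (φ := φ)) := by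
        rwa [mul_one] at hmem
      have hv' : MonoidAlgebra.single (r⁻¹) (1 : ℂ) • v ∈ tWeight φ t :=
        stmt6_tW_H φ t h1 hv
      have h2 := csingle r _ hv'
      rwa [← mul_smul, MonoidAlgebra.single_mul_single, one_mul, mul_inv_cancel,
        ← MonoidAlgebra.one_def, one_smul] at h2
    intro v
    have hv : v ∈ Submodule.span (MonoidAlgebra ℂ (X ⋊[φ] W)) (tWeight φ t (V := V)) := by
      rw [hgen]; trivial
    exact Submodule.span_induction (p := fun x _ => x ∈ Sr)
      (fun x hx => hsub hx) c0 (fun x y _ _ hx hy => cadd x hx y hy)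
      (fun a x _ hx => csmul a x hx) hv
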